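/- For all real α ≥ 0, β ≥ α and N ∈ (2,∞), the inequality min( −(α−1)², β − α² − α ) + min( −β²/(N−2), β(α−1) ) ≥ 0 fails. That is, there are no α ≥ 0, β ≥ α, N ∈ (2,∞) for which the α-Grushin hyperbolic half-plane satisfies Ric_{N,V} ≥ 0. -/

import Mathlib

open Real

/-- For all `α ≥ 0`, `β ≥ α` and `N ∈ (2,∞)`, the inequality
`min(−(α−1)², β−α²−α) + min(−β²/(N−2), β(α−1)) ≥ 0` fails: the α-Grushin hyperbolic
half-plane never satisfies `Ric_{N,V} ≥ 0` with finite `N > 2`. -/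
theorem grushin_hyperbolic_no_RCD_zero_N (α β N : ℝ)
    (hα : 0 ≤ α) (hβ : α ≤ β) (hN : 2 < N) :
    ¬ (min (-(α - 1) ^ 2) (β - α ^ 2 - α) +
        min (-(β ^ 2 / (N - 2))) (β * (α - 1)) ≥ 0) := by
  intro h
  have h1 : min (-(α - 1) ^ 2) (β - α ^ 2 - α) ≤ -(α - 1) ^ 2 := min_le_left _ _
  have h2 : min (-(β ^ 2 / (N - 2))) (β * (α - 1)) ≤ -(β ^ 2 / (N - 2)) := min_le_left _ _
  have hd : 0 ≤ β ^ 2 / (N - 2) := div_nonneg (sq_nonneg β) (by linarith)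
  have e1 : (α - 1) ^ 2 = 0 := by nlinarith [sq_nonneg (α - 1)]
  have e2 : β = 0 := by
    have : β ^ 2 / (N - 2) = 0 := by nlinarith [sq_nonneg (α - 1)]
    rw [div_eq_zero_iff, pow_eq_zero_iff two_ne_zero] at this
    rcases this with h | h
    · exact h
    · linarith
  have : α = 1 := by nlinarith [sq_nonneg (α - 1)]
  linarith
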